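/- arXiv:1904.07699 — 5 statements merged into one kernel-verified Lean document; each statement's English description precedes it below -/
import Mathlib

section
/- Let A = [[a,b],[c,d]] be a 2×2 real matrix with a, b, c, d > 0. Then for every z in the closed disc cl(D), Re w_A(z) > 0 (in particular w_A(z) ≠ 0), and φ_A maps cl(D) into D; in fact φ_A(cl(D)) is the closed disc centred on the real axis whose boundary passes through the points a/(a+c) and b/(b+d), both of which lie in the open interval (0,1). -/
open Set Metric

/-- `D`, the open disc of radius 1/2 centred at 1/2 in ℂ. -/
def Ddisc : Set ℂ := Metric.ball (1/2 : ℂ) (1/2)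

/-- For a 2×2 matrix `A = [[a,b],[c,d]]`, `wFun A z = (a+c−b−d)z + b + d`. -/
noncomputable def wFun (A : Matrix (Fin 2) (Fin 2) ℂ) (z : ℂ) : ℂ :=
  (A 0 0 + A 1 0 - A 0 1 - A 1 1) * z + A 0 1 + A 1 1

/-- For a 2×2 matrix `A = [[a,b],[c,d]]`, `phiFun A z = ((a−b)z + b)/w_A(z)`. -/
noncomputable def phiFun (A : Matrix (Fin 2) (Fin 2) ℂ) (z : ℂ) : ℂ :=
  ((A 0 0 - A 0 1) * z + A 0 1) / wFun A z

lemma abs_le_iff_normSq_le (w : ℂ) (r : ℝ) (hr : 0 ≤ r) :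
    ‖w‖ ≤ r ↔ Complex.normSq w ≤ r^2 := by
  rw [← Complex.sq_norm]
  exact ⟨fun h => by nlinarith [norm_nonneg w], fun h => by nlinarith [norm_nonneg w]⟩

lemma mem_cb_iff (z : ℂ) : z ∈ closedBall (1/2 : ℂ) (1/2) ↔ Complex.normSq z ≤ z.re := by
  rw [mem_closedBall, Complex.dist_eq, abs_le_iff_normSq_le _ _ (by norm_num)]
  simp [Complex.normSq_apply, Complex.sub_re, Complex.sub_im]
  constructor <;> intro h <;> nlinarith

lemma key_id (a b c d : ℝ) (hs : a + c ≠ 0) (ht : b + d ≠ 0) (z : ℂ) :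
    (a/(a+c) - b/(b+d))^2/4 * Complex.normSq (((a:ℂ)+c-b-d)*z + b + d)
      - Complex.normSq ((((a:ℂ)-b)*z + b) - (((a/(a+c)+b/(b+d))/2 : ℝ) : ℂ) * (((a:ℂ)+c-b-d)*z + b + d))
    = (a/(a+c) - b/(b+d))^2 * (a+c) * (b+d) * (z.re - Complex.normSq z) := by
  simp only [Complex.normSq_apply, Complex.add_re, Complex.add_im, Complex.sub_re,
    Complex.sub_im, Complex.mul_re, Complex.mul_im, Complex.ofReal_re, Complex.ofReal_im]
  field_simp
  ring

set_option maxHeartbeats 2000000 in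
/-- For a positive 2×2 matrix, $\mathrm{Re}\, w_A > 0$ on $\overline{D}$
(so $w_A \neq 0$ there), and $\varphi_A$ maps $\overline{D}$ into $D$; in fact the
image is the closed disc centred on the real axis whose boundary passes through
$a/(a+c)$ and $b/(b+d)$, both in $(0,1)$. -/
theorem positive_matrix_disc_action (a b c d : ℝ)
    (ha : 0 < a) (hb : 0 < b) (hc : 0 < c) (hd : 0 < d) :
    (∀ z ∈ closedBall (1/2 : ℂ) (1/2),
      0 < (wFun !![(a : ℂ), (b : ℂ); (c : ℂ), (d : ℂ)] z).re ∧
      wFun !![(a : ℂ), (b : ℂ); (c : ℂ), (d : ℂ)] z ≠ 0) ∧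
    (phiFun !![(a : ℂ), (b : ℂ); (c : ℂ), (d : ℂ)] '' closedBall (1/2 : ℂ) (1/2) ⊆ Ddisc) ∧
    a / (a + c) ∈ Set.Ioo (0 : ℝ) 1 ∧ b / (b + d) ∈ Set.Ioo (0 : ℝ) 1 ∧
    phiFun !![(a : ℂ), (b : ℂ); (c : ℂ), (d : ℂ)] '' closedBall (1/2 : ℂ) (1/2)
      = closedBall (((a / (a + c) + b / (b + d)) / 2 : ℝ) : ℂ)
          (|a / (a + c) - b / (b + d)| / 2) := by
  have hs : (0:ℝ) < a + c := by linarith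
  have ht : (0:ℝ) < b + d := by linarith
  set p : ℝ := a/(a+c) with hpdef
  set q : ℝ := b/(b+d) with hqdef
  have hp0 : 0 < p := div_pos ha hs
  have hp1 : p < 1 := by rw [hpdef, div_lt_one hs]; linarith
  have hq0 : 0 < q := div_pos hb ht
  have hq1 : q < 1 := by rw [hqdef, div_lt_one ht]; linarith
  set m : ℝ := (p+q)/2 with hmdef
  set r : ℝ := |p - q|/2 with hrdef
  have hr0 : 0 ≤ r := by positivity
  clear_value p q m r
  have hpq : p - q = (a*d - b*c)/((a+c)*(b+d)) := by
    rw [hpdef, hqdef]; field_simp; ring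
  have hW : ∀ z : ℂ, wFun !![(a:ℂ),(b:ℂ);(c:ℂ),(d:ℂ)] z = ((a:ℂ)+c-b-d)*z + b + d :=
    fun _ => rfl
  have hPhi : ∀ z : ℂ, phiFun !![(a:ℂ),(b:ℂ);(c:ℂ),(d:ℂ)] z
      = (((a:ℂ)-b)*z + b) / (((a:ℂ)+c-b-d)*z + b + d) := fun _ => rfl
  have hWre : ∀ z : ℂ, (((a:ℂ)+c-b-d)*z + b + d).re = (a+c-b-d)*z.re + (b+d) := by
    intro z
    simp [Complex.add_re, Complex.sub_re, Complex.mul_re]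
    ring
  -- Part 1
  have part1 : ∀ z ∈ closedBall (1/2 : ℂ) (1/2),
      0 < (wFun !![(a : ℂ), (b : ℂ); (c : ℂ), (d : ℂ)] z).re ∧
      wFun !![(a : ℂ), (b : ℂ); (c : ℂ), (d : ℂ)] z ≠ 0 := by
    intro z hz
    have hzn := (mem_cb_iff z).1 hz
    rw [Complex.normSq_apply] at hzn
    have hx0 : 0 ≤ z.re := by nlinarith [mul_self_nonneg z.im, mul_self_nonneg z.re]
    have hx1 : z.re ≤ 1 := by nlinarith [mul_self_nonneg z.im]
    have hpos : 0 < (wFun !![(a : ℂ), (b : ℂ); (c : ℂ), (d : ℂ)] z).re := by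
      rw [hW, hWre]
      rcases le_total (a+c) (b+d) with h | h <;> nlinarith
    refine ⟨hpos, fun h0 => ?_⟩
    rw [h0] at hpos
    simp at hpos
  -- Image equality
  have himg : phiFun !![(a : ℂ), (b : ℂ); (c : ℂ), (d : ℂ)] '' closedBall (1/2 : ℂ) (1/2)
      = closedBall ((m : ℝ) : ℂ) r := by
    ext ζ
    simp only [Set.mem_image]
    constructor
    · rintro ⟨z, hz, rfl⟩
      have hzn := (mem_cb_iff z).1 hz
      obtain ⟨-, hw0⟩ := part1 z hz
      rw [hW] at hw0
      rw [mem_closedBall, Complex.dist_eq, abs_le_iff_normSq_le _ _ hr0, hPhi]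
      have h1 : (((a:ℂ)-b)*z + b) / (((a:ℂ)+c-b-d)*z + b + d) - ((m:ℝ):ℂ)
          = ((((a:ℂ)-b)*z + b) - ((m:ℝ):ℂ) * (((a:ℂ)+c-b-d)*z + b + d))
            / (((a:ℂ)+c-b-d)*z + b + d) := by
        rw [sub_div, mul_div_cancel_right₀ _ hw0]
      rw [h1, Complex.normSq_div]
      have hnw : 0 < Complex.normSq (((a:ℂ)+c-b-d)*z + b + d) := Complex.normSq_pos.2 hw0
      rw [div_le_iff₀ hnw]
      have hid := key_id a b c d hs.ne' ht.ne' z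
      rw [← hpdef, ← hqdef, ← hmdef] at hid
      have hr2 : r^2 = (p-q)^2/4 := by rw [hrdef, div_pow, sq_abs]; norm_num
      rw [hr2]
      have hnn : 0 ≤ (p-q)^2 * (a+c) * (b+d) * (z.re - Complex.normSq z) :=
        mul_nonneg (mul_nonneg (mul_nonneg (sq_nonneg _) hs.le) ht.le) (by linarith)
      linarith [hid, hnn]
    · intro hζ
      by_cases hK : a*d - b*c = 0
      · have hpq0 : p - q = 0 := by rw [hpq, hK, zero_div]
        have hr00 : r = 0 := by rw [hrdef, hpq0, abs_zero, zero_div]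
        have hζm : ζ = ((m:ℝ):ℂ) := by
          rw [mem_closedBall, hr00, dist_le_zero] at hζ; exact hζ
        refine ⟨0, ?_, ?_⟩
        · rw [mem_cb_iff]; simp
        · rw [hPhi, hζm]
          have hmq : m = q := by rw [hmdef]; linarith [sub_eq_zero.mp hpq0]
          rw [show ((a:ℂ)-b)*0 + b = ((b:ℝ):ℂ) by push_cast; ring,
            show ((a:ℂ)+c-b-d)*0 + ↑b + ↑d = ((b+d:ℝ):ℂ) by push_cast; ring,
            ← Complex.ofReal_div, hmq, hqdef]
      · have hpqne : p - q ≠ 0 := by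
          rw [hpq]
          exact div_ne_zero hK (by positivity)
        have habs : ‖ζ - ((m:ℝ):ℂ)‖ ≤ r := by
          rw [mem_closedBall, Complex.dist_eq] at hζ; exact hζ
        have hγ : ‖(a:ℂ)+c-b-d‖ = |a+c-b-d| := by
          rw [show ((a:ℂ)+c-b-d) = ((a+c-b-d : ℝ):ℂ) by push_cast; ring,
            Complex.norm_real, Real.norm_eq_abs]
        have hDz0 : ((a:ℂ)-b) - ((a:ℂ)+c-b-d)*ζ ≠ 0 := by
          intro h0
          have h1 : (((a - b - (a+c-b-d)*m : ℝ)):ℂ) = ((a:ℂ)+c-b-d)*(ζ - ((m:ℝ):ℂ)) := by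
            have : ((a:ℂ)-b) = ((a:ℂ)+c-b-d)*ζ := by
              have := sub_eq_zero.mp h0; exact this
            push_cast
            rw [this]; ring
          have hαm : a - b - (a+c-b-d)*m = (p-q)*(a+c+b+d)/2 := by
            rw [hmdef, hpdef, hqdef]; field_simp; ring
          have h2 := congrArg (‖·‖) h1
          rw [Complex.norm_real, Real.norm_eq_abs, norm_mul, hγ, hαm] at h2
          have h3 : |(p-q)*(a+c+b+d)/2| = |p - q| * (a+c+b+d)/2 := by
            rw [abs_div, abs_mul, abs_of_pos (by linarith : (0:ℝ) < a+c+b+d)]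
            norm_num
          rw [h3] at h2
          have h4 : |a+c-b-d| * ‖ζ - ((m:ℝ):ℂ)‖ ≤ |a+c-b-d| * (|p-q|/2) := by
            apply mul_le_mul_of_nonneg_left _ (abs_nonneg _)
            rw [← hrdef]; exact habs
          have h5 : |a+c-b-d| < a+c+b+d := abs_lt.2 ⟨by linarith, by linarith⟩
          have h6 : 0 < |p-q| := abs_pos.2 hpqne
          nlinarith
        set Dz : ℂ := ((a:ℂ)-b) - ((a:ℂ)+c-b-d)*ζ with hDzdef
        have hK' : ((a*d - b*c : ℝ):ℂ) ≠ 0 := Complex.ofReal_ne_zero.2 hK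
        clear_value Dz
        set z : ℂ := (((b+d:ℝ):ℂ)*ζ - ((b:ℝ):ℂ))/Dz with hzdef
        clear_value z
        have hzeq : z * Dz = ((b+d:ℝ):ℂ)*ζ - ((b:ℝ):ℂ) := by
          rw [hzdef, div_mul_cancel₀ _ hDz0]
        have hwz' : (((a:ℂ)+c-b-d)*z + b + d) * Dz = ((a*d - b*c : ℝ):ℂ) := by
          have e : (((a:ℂ)+c-b-d)*z + b + d) * Dz
              = ((a:ℂ)+c-b-d)*(z*Dz) + ((b:ℂ)+d)*Dz := by ring
          rw [e, hzeq, hDzdef]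
          push_cast
          ring
        have hNz' : (((a:ℂ)-b)*z + b) * Dz = ((a*d - b*c : ℝ):ℂ)*ζ := by
          have e : (((a:ℂ)-b)*z + b) * Dz = ((a:ℂ)-b)*(z*Dz) + (b:ℂ)*Dz := by ring
          rw [e, hzeq, hDzdef]
          push_cast
          ring
        have hwz : ((a:ℂ)+c-b-d)*z + b + d = ((a*d - b*c : ℝ):ℂ)/Dz :=
          (eq_div_iff hDz0).mpr hwz'
        have hNz : ((a:ℂ)-b)*z + b = ((a*d - b*c : ℝ):ℂ)*ζ/Dz :=
          (eq_div_iff hDz0).mpr hNz'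
        have hw0 : ((a:ℂ)+c-b-d)*z + b + d ≠ 0 := by
          rw [hwz]; exact div_ne_zero hK' hDz0
        have hφ : phiFun !![(a : ℂ), (b : ℂ); (c : ℂ), (d : ℂ)] z = ζ := by
          rw [hPhi, show (((a:ℂ)-b)*z + b) / (((a:ℂ)+c-b-d)*z + b + d)
              = ((((a:ℂ)-b)*z + b) * Dz) / (((((a:ℂ)+c-b-d)*z + b + d)) * Dz) from
              (mul_div_mul_right _ _ hDz0).symm,
            hNz', hwz']
          exact mul_div_cancel_left₀ ζ hK'
        refine ⟨z, ?_, hφ⟩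
        rw [mem_cb_iff]
        have hid := key_id a b c d hs.ne' ht.ne' z
        rw [← hpdef, ← hqdef, ← hmdef] at hid
        have hNmW : (((a:ℂ)-b)*z + b) - ((m:ℝ):ℂ)*(((a:ℂ)+c-b-d)*z + b + d)
            = (ζ - ((m:ℝ):ℂ)) * (((a:ℂ)+c-b-d)*z + b + d) := by
          have hNW : ((a:ℂ)-b)*z + b = ζ * (((a:ℂ)+c-b-d)*z + b + d) := by
            rw [hNz, hwz]; ring
          rw [hNW]; ring
        rw [hNmW, Complex.normSq_mul] at hid
        have hnsζ : Complex.normSq (ζ - ((m:ℝ):ℂ)) ≤ (p-q)^2/4 := by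
          have h := (abs_le_iff_normSq_le _ _ hr0).1 habs
          rw [hrdef] at h
          have h' : (|p - q|/2)^2 = (p-q)^2/4 := by rw [div_pow, sq_abs]; norm_num
          linarith
        have hnsW : 0 ≤ Complex.normSq (((a:ℂ)+c-b-d)*z + b + d) := Complex.normSq_nonneg _
        have hP : 0 < (p-q)^2 := by positivity
        have hC : 0 < (p-q)^2 * (a+c) * (b+d) := mul_pos (mul_pos hP hs) ht
        have h9 : 0 ≤ (p-q)^2 * (a+c) * (b+d) * (z.re - Complex.normSq z) := by
          have h8 := mul_le_mul_of_nonneg_right hnsζ hnsW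
          linarith
        by_contra hlt
        push_neg at hlt
        have h10 : z.re - Complex.normSq z < 0 := by linarith
        have h11 := mul_neg_of_pos_of_neg hC h10
        linarith
  -- subset of Ddisc
  have hsub : closedBall ((m : ℝ) : ℂ) r ⊆ Ddisc := by
    intro ζ hζ
    rw [show Ddisc = ball (1/2:ℂ) (1/2) from rfl, mem_ball]
    have h1 : dist ζ (((m:ℝ)):ℂ) ≤ r := mem_closedBall.1 hζ
    have h2 : dist (((m:ℝ)):ℂ) (1/2:ℂ) = |m - 1/2| := by
      rw [Complex.dist_eq, show ((m:ℝ):ℂ) - 1/2 = ((m - 1/2 : ℝ):ℂ) by push_cast; ring,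
        Complex.norm_real, Real.norm_eq_abs]
    calc dist ζ (1/2:ℂ) ≤ dist ζ (((m:ℝ)):ℂ) + dist (((m:ℝ)):ℂ) (1/2:ℂ) := dist_triangle _ _ _
      _ < 1/2 := by
          rw [h2]
          rw [hrdef] at h1
          rcases abs_cases (p - q) with ⟨e1, -⟩ | ⟨e1, -⟩ <;>
            rcases abs_cases (m - 1/2) with ⟨e2, -⟩ | ⟨e2, -⟩ <;>
            rw [e1] at h1 <;> rw [e2] <;> linarith [hmdef.le, hmdef.ge]
  refine ⟨part1, ?_, ⟨hp0, hp1⟩, ⟨hq0, hq1⟩, himg⟩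
  rw [himg]
  exact hsub
end

section
/- Let A = [[a,b],[c,d]] be a complex 2×2 matrix such that φ_A(cl(D)) ⊆ D and Re w_A(z) > 0 for all z ∈ cl(D). For t ∈ ℂ let A_t := [[t,b],[c,d]] be the matrix obtained by replacing the entry a by t (the perturbations of the other three entries are analogous). Then there exist a constant C₀ < ∞, a constant r ∈ (0,1), and bounded analytic functions f_k : D → ℂ with sup_{z∈D} |f_k(z)| ≤ C₀^k r/2 for every k ≥ 0, such that for every t ∈ ℂ with |t − a| < C₀⁻¹ and every z ∈ D, φ_{A_t}(z) − 1/2 = Σ_{k=0}^∞ (t − a)^k f_k(z), the series converging absolutely. -/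
open Set Metric

lemma wFun_eq (a b c d z : ℂ) : wFun !![a,b;c,d] z = (a+c-b-d)*z + b + d := by
  simp [wFun]

lemma phiFun_eq (a b c d z : ℂ) :
    phiFun !![a,b;c,d] z = ((a-b)*z + b)/((a+c-b-d)*z + b + d) := by
  simp [phiFun, wFun]


/-- Perturbing the entry $a$ of $A=[[a,b],[c,d]]$, the function
$\varphi_{A_t} - 1/2$ on $D$ is given by a power series in $t-a$ with bounded analytic
coefficients $f_k$ satisfying $\|f_k\|_\infty \le C_0^k r/2$. -/
theorem phiFun_perturbation_series (a b c d : ℂ)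
    (hphi : phiFun !![a, b; c, d] '' closedBall (1/2 : ℂ) (1/2) ⊆ Ddisc)
    (hw : ∀ z ∈ closedBall (1/2 : ℂ) (1/2), 0 < (wFun !![a, b; c, d] z).re) :
    ∃ C₀ : ℝ, 0 < C₀ ∧ ∃ r ∈ Set.Ioo (0 : ℝ) 1, ∃ f : ℕ → ℂ → ℂ,
      (∀ k : ℕ, DifferentiableOn ℂ (f k) Ddisc ∧
        ∀ z ∈ Ddisc, ‖f k z‖ ≤ C₀ ^ k * r / 2) ∧
      ∀ t : ℂ, ‖t - a‖ < C₀⁻¹ → ∀ z ∈ Ddisc,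
        HasSum (fun k : ℕ => (t - a) ^ k * f k z) (phiFun !![t, b; c, d] z - 1/2) ∧
        Summable (fun k : ℕ => ‖(t - a) ^ k * f k z‖) := by
  set K : Set ℂ := closedBall (1/2 : ℂ) (1/2) with hK
  have hKc : IsCompact K := isCompact_closedBall _ _
  have hKne : K.Nonempty := ⟨1/2, by simp [hK]⟩
  have hDK : Ddisc ⊆ K := ball_subset_closedBall
  have hwne : ∀ z ∈ K, wFun !![a,b;c,d] z ≠ 0 := by
    intro z hz h
    have h2 := hw z hz
    rw [h] at h2
    simp only [Complex.zero_re, lt_self_iff_false] at h2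
  have hwcont : Continuous (wFun !![a,b;c,d]) := by
    have he : wFun !![a,b;c,d] = fun z => (a+c-b-d)*z + b + d := funext (wFun_eq a b c d)
    rw [he]; fun_prop
  obtain ⟨z₀, hz₀K, hz₀min⟩ :=
    hKc.exists_isMinOn hKne ((Complex.continuous_re.comp hwcont).continuousOn)
  set m : ℝ := (wFun !![a,b;c,d] z₀).re with hm
  have hm0 : 0 < m := hw z₀ hz₀K
  have hmW : ∀ z ∈ K, m ≤ ‖wFun !![a,b;c,d] z‖ := by
    intro z hz
    calc m ≤ (wFun !![a,b;c,d] z).re := hz₀min hz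
      _ ≤ ‖wFun !![a,b;c,d] z‖ := Complex.re_le_norm _
  have hpc : ContinuousOn (phiFun !![a,b;c,d]) K := by
    have he : phiFun !![a,b;c,d] = fun z => ((a-b)*z + b)/((a+c-b-d)*z + b + d) :=
      funext (phiFun_eq a b c d)
    rw [he]
    apply ContinuousOn.div (by fun_prop) (by fun_prop)
    intro z hz
    have h2 := hwne z hz
    rwa [wFun_eq] at h2
  obtain ⟨z₁, hz₁K, hz₁max⟩ :=
    hKc.exists_isMaxOn hKne ((hpc.sub continuousOn_const).norm)
  set ρ : ℝ := ‖phiFun !![a,b;c,d] z₁ - 1/2‖ with hρ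
  have hρ0 : 0 ≤ ρ := norm_nonneg _
  have hρlt : ρ < 1/2 := by
    have h2 := hphi ⟨z₁, hz₁K, rfl⟩
    simpa [Ddisc, mem_ball, dist_eq_norm, hρ] using h2
  have hρmax : ∀ z ∈ K, ‖phiFun !![a,b;c,d] z - 1/2‖ ≤ ρ := fun z hz => hz₁max hz
  have hz1 : ∀ z ∈ K, ‖z‖ ≤ 1 := by
    intro z hz
    have h2 : ‖z - 1/2‖ ≤ 1/2 := by simpa [hK, mem_closedBall, dist_eq_norm] using hz
    have h3 : ‖(1/2 : ℂ)‖ = 1/2 := by norm_num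
    calc ‖z‖ = ‖z - 1/2 + 1/2‖ := by ring_nf
      _ ≤ ‖z - 1/2‖ + ‖(1/2 : ℂ)‖ := norm_add_le _ _
      _ ≤ 1 := by rw [h3]; linarith
  refine ⟨2/m, by positivity, ρ + 1/2, ⟨by linarith, by linarith⟩,
    fun k z => if k = 0 then phiFun !![a,b;c,d] z - 1/2
      else (phiFun !![a,b;c,d] z - 1) * (-z / wFun !![a,b;c,d] z)^k, ?_, ?_⟩
  · -- differentiability and bounds
    intro k
    beta_reduce
    constructor
    · have hphidiff : DifferentiableOn ℂ (phiFun !![a,b;c,d]) Ddisc := by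
        have he : phiFun !![a,b;c,d] = fun z => ((a-b)*z + b)/((a+c-b-d)*z + b + d) :=
          funext (phiFun_eq a b c d)
        rw [he]
        apply DifferentiableOn.div (by fun_prop) (by fun_prop)
        intro z hz
        have h2 := hwne z (hDK hz)
        rwa [wFun_eq] at h2
      have hd1 : DifferentiableOn ℂ (fun z => phiFun !![a,b;c,d] z - 1/2) Ddisc :=
        hphidiff.sub (differentiableOn_const _)
      have hd2 : DifferentiableOn ℂ
          (fun z => (phiFun !![a,b;c,d] z - 1) * (-z / wFun !![a,b;c,d] z)^k) Ddisc := by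
        apply DifferentiableOn.mul (hphidiff.sub (differentiableOn_const _))
        apply DifferentiableOn.pow
        apply DifferentiableOn.div (by fun_prop)
        · have he : wFun !![a,b;c,d] = fun z => (a+c-b-d)*z + b + d := funext (wFun_eq a b c d)
          rw [he]; fun_prop
        · exact fun z hz => hwne z (hDK hz)
      by_cases hk : k = 0
      · simp only [if_pos hk]; exact hd1
      · simp only [if_neg hk]; exact hd2
    · intro z hz
      have hzK := hDK hz
      rcases k with _ | k
      · rw [if_pos rfl, pow_zero, one_mul]
        have h2 := hρmax z hzK
        linarith
      · rw [if_neg (Nat.succ_ne_zero k), norm_mul, norm_pow]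
        have h1 : ‖phiFun !![a,b;c,d] z - 1‖ ≤ ρ + 1/2 := by
          have hhalf : ‖(-1/2 : ℂ)‖ = 1/2 := by norm_num
          have h2 := hρmax z hzK
          calc ‖phiFun !![a,b;c,d] z - 1‖
              = ‖(phiFun !![a,b;c,d] z - 1/2) + (-1/2 : ℂ)‖ := by ring_nf
            _ ≤ ‖phiFun !![a,b;c,d] z - 1/2‖ + ‖(-1/2 : ℂ)‖ := norm_add_le _ _
            _ ≤ ρ + 1/2 := by rw [hhalf]; linarith
        have h2 : ‖-z / wFun !![a,b;c,d] z‖ ≤ 1/m := by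
          rw [norm_div, norm_neg]
          exact div_le_div₀ (by positivity) (hz1 z hzK) hm0 (hmW z hzK)
        have h3 : ‖-z / wFun !![a,b;c,d] z‖ ^ (k+1) ≤ (1/m)^(k+1) :=
          pow_le_pow_left₀ (norm_nonneg _) h2 _
        have h4 : (1/m)^(k+1) ≤ (2/m)^(k+1)/2 := by
          rw [div_pow, div_pow, one_pow, div_div, div_le_div_iff₀ (by positivity) (by positivity)]
          have h2k : (2:ℝ) ≤ 2^(k+1) := le_self_pow₀ (by norm_num) (Nat.succ_ne_zero k)
          nlinarith [pow_pos hm0 (k+1)]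
        calc ‖phiFun !![a,b;c,d] z - 1‖ * ‖-z / wFun !![a,b;c,d] z‖^(k+1)
            ≤ (ρ + 1/2) * ((2/m)^(k+1)/2) :=
              mul_le_mul h1 (h3.trans h4) (by positivity) (by linarith)
          _ = (2/m)^(k+1) * (ρ + 1/2)/2 := by ring
  · -- the power series identity
    intro t ht z hz
    beta_reduce
    have hzK := hDK hz
    have ht' : ‖t - a‖ < m/2 := by rwa [show ((2:ℝ)/m)⁻¹ = m/2 by rw [inv_div]] at ht
    have hW0 : wFun !![a,b;c,d] z ≠ 0 := hwne z hzK
    have hWm : m ≤ ‖wFun !![a,b;c,d] z‖ := hmW z hzK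
    have hsu : ‖(t - a) * (-z / wFun !![a,b;c,d] z)‖ < 1/2 := by
      rw [norm_mul, norm_div, norm_neg]
      have h1 : ‖z‖/‖wFun !![a,b;c,d] z‖ ≤ 1/m :=
        div_le_div₀ (by positivity) (hz1 z hzK) hm0 hWm
      calc ‖t - a‖ * (‖z‖/‖wFun !![a,b;c,d] z‖) ≤ ‖t - a‖ * (1/m) :=
            mul_le_mul_of_nonneg_left h1 (norm_nonneg _)
        _ < (m/2) * (1/m) := mul_lt_mul_of_pos_right ht' (by positivity)
        _ = 1/2 := by field_simp
    have hsu1 : ‖(t - a) * (-z / wFun !![a,b;c,d] z)‖ < 1 := hsu.trans (by norm_num)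
    have hWs : wFun !![a,b;c,d] z + (t - a) * z ≠ 0 := by
      intro h
      have hzn : ‖(t - a) * z‖ < ‖wFun !![a,b;c,d] z‖ := by
        rw [norm_mul]
        calc ‖t - a‖ * ‖z‖ ≤ ‖t - a‖ * 1 := mul_le_mul_of_nonneg_left (hz1 z hzK) (norm_nonneg _)
          _ = ‖t - a‖ := mul_one _
          _ < m/2 := ht'
          _ < m := by linarith
          _ ≤ ‖wFun !![a,b;c,d] z‖ := hWm
      have he : wFun !![a,b;c,d] z = -((t - a)*z) := by linear_combination h
      rw [he, norm_neg] at hzn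
      exact absurd hzn (lt_irrefl _)
    have h1su : (1:ℂ) - (t - a) * (-z / wFun !![a,b;c,d] z) ≠ 0 := by
      have he : (1:ℂ) - (t - a) * (-z / wFun !![a,b;c,d] z)
          = (wFun !![a,b;c,d] z + (t - a) * z)/(wFun !![a,b;c,d] z) := by
        field_simp
        ring
      rw [he]
      exact div_ne_zero hWs hW0
    have hdecomp : ∀ k : ℕ, (t - a)^k * (if k = 0 then phiFun !![a,b;c,d] z - 1/2
        else (phiFun !![a,b;c,d] z - 1) * (-z / wFun !![a,b;c,d] z)^k)
        = (phiFun !![a,b;c,d] z - 1) * ((t - a) * (-z / wFun !![a,b;c,d] z))^k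
          + (if k = 0 then (1/2:ℂ) else 0) := by
      intro k
      rcases k with _ | k
      · rw [if_pos rfl, if_pos rfl, pow_zero, pow_zero]; ring
      · rw [if_neg (Nat.succ_ne_zero k), if_neg (Nat.succ_ne_zero k), mul_pow]
        ring
    have hG1 : HasSum
        (fun k : ℕ => (phiFun !![a,b;c,d] z - 1) * ((t - a) * (-z / wFun !![a,b;c,d] z))^k)
        ((phiFun !![a,b;c,d] z - 1) * (1 - (t - a) * (-z / wFun !![a,b;c,d] z))⁻¹) :=
      (hasSum_geometric_of_norm_lt_one hsu1).mul_left _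
    have hG2 : HasSum (fun k : ℕ => if k = 0 then (1/2:ℂ) else 0) (1/2) :=
      hasSum_ite_eq 0 (1/2)
    have hsum : HasSum (fun k : ℕ => (t - a)^k * (if k = 0 then phiFun !![a,b;c,d] z - 1/2
        else (phiFun !![a,b;c,d] z - 1) * (-z / wFun !![a,b;c,d] z)^k))
        ((phiFun !![a,b;c,d] z - 1) * (1 - (t - a) * (-z / wFun !![a,b;c,d] z))⁻¹ + 1/2) := by
      rw [funext hdecomp]; exact hG1.add hG2
    have hval : (phiFun !![a,b;c,d] z - 1) * (1 - (t - a) * (-z / wFun !![a,b;c,d] z))⁻¹ + 1/2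
        = phiFun !![t,b;c,d] z - 1/2 := by
      have hW0' : (a+c-b-d)*z + b + d ≠ 0 := by rwa [wFun_eq] at hW0
      have hWs' : (t+c-b-d)*z + b + d ≠ 0 := by
        have he : (t+c-b-d)*z + b + d = wFun !![a,b;c,d] z + (t - a)*z := by
          rw [wFun_eq]; ring
        rw [he]; exact hWs
      have hQ : (a+c-b-d)*z + b + d + (t - a)*z ≠ 0 := by
        have h2 := hWs; rwa [wFun_eq] at h2
      have e1 : (1:ℂ) - (t - a) * (-z / wFun !![a,b;c,d] z)
          = (wFun !![a,b;c,d] z + (t - a) * z)/(wFun !![a,b;c,d] z) := by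
        field_simp
        ring
      rw [e1, inv_div, phiFun_eq a b c d z, phiFun_eq t b c d z, wFun_eq,
        show (t+c-b-d)*z + b + d = ((a+c-b-d)*z+b+d) + (t-a)*z by ring]
      rw [div_sub_one hW0', div_mul_div_cancel₀ hW0']
      rw [div_add_div _ _ hQ two_ne_zero, div_sub_div _ _ hQ two_ne_zero, div_left_inj' (mul_ne_zero hQ two_ne_zero)]
      ring
    refine ⟨by rw [← hval]; exact hsum, ?_⟩
    have hS1 : Summable (fun k : ℕ =>
        ‖(phiFun !![a,b;c,d] z - 1) * ((t - a) * (-z / wFun !![a,b;c,d] z))^k‖) := by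
      have hg : Summable (fun n : ℕ => ‖(t - a) * (-z / wFun !![a,b;c,d] z)‖ ^ n) :=
        summable_geometric_of_lt_one (norm_nonneg _) hsu1
      refine (hg.mul_left ‖phiFun !![a,b;c,d] z - 1‖).congr fun k => ?_
      simp [norm_mul, norm_pow]
    have hS2 : Summable (fun k : ℕ => ‖(if k = 0 then (1/2:ℂ) else 0)‖) := by
      refine (hasSum_ite_eq (0:ℕ) ‖(1/2:ℂ)‖).summable.congr fun k => ?_
      by_cases h : k = 0 <;> simp [h]
    refine Summable.of_nonneg_of_le (fun k => norm_nonneg _) (fun k => ?_) (hS1.add hS2)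
    rw [hdecomp k]
    exact norm_add_le _ _
end

section
/- Let 0 < r < 1 and 0 < C₀ < ∞, and for each k ≥ 0 let f_k : D → ℂ be a bounded analytic function with sup_{z∈D} |f_k(z)| ≤ C₀^k r/2. Then for every n ≥ 1 and every m ≥ 0 there exists a bounded analytic function φ_{m,n} : D → ℂ, not depending on x, such that for every x ∈ ℂ with |x| < C₀⁻¹ and every z ∈ D, ( Σ_{k=0}^∞ x^k f_k(z) )^n = Σ_{m=0}^∞ x^m φ_{m,n}(z), and sup_{z∈D} |φ_{m,n}(z)| ≤ (C₀^m r^n / 2^n) · (m+n−1)! / (m!(n−1)!). -/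
open Set Metric

noncomputable def Phi (f : ℕ → ℂ → ℂ) : ℕ → ℕ → ℂ → ℂ
  | 0 => fun m _ => if m = 0 then 1 else 0
  | n + 1 => fun m z => ∑ ij ∈ Finset.HasAntidiagonal.antidiagonal m, Phi f n ij.1 z * f ij.2 z

lemma sum_choose_aux (n m : ℕ) :
    ∑ i ∈ Finset.range (m + 1), Nat.choose (i + n - 1) i = Nat.choose (m + n) m := by
  induction m with
  | zero => simp
  | succ m ih =>
      rw [Finset.sum_range_succ, ih]
      have h1 : m + 1 + n - 1 = m + n := by omega
      have h2 : m + 1 + n = (m + n) + 1 := by omega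
      rw [h1, h2, Nat.choose_succ_succ]

lemma Phi_diff (f : ℕ → ℂ → ℂ) (hf : ∀ k, DifferentiableOn ℂ (f k) Ddisc) :
    ∀ n m, DifferentiableOn ℂ (Phi f n m) Ddisc := by
  intro n
  induction n with
  | zero => intro m; simp only [Phi]; exact differentiableOn_const _
  | succ n ih =>
      intro m
      simp only [Phi]
      exact DifferentiableOn.fun_sum fun ij _ => (ih ij.1).mul (hf ij.2)

lemma Phi_bound (r C₀ : ℝ) (hr : 0 < r) (hC₀ : 0 < C₀) (f : ℕ → ℂ → ℂ)
    (hf : ∀ k, ∀ z ∈ Ddisc, ‖f k z‖ ≤ C₀ ^ k * r / 2) :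
    ∀ n m, ∀ z ∈ Ddisc,
      ‖Phi f n m z‖ ≤ C₀ ^ m * (r / 2) ^ n * (Nat.choose (m + n - 1) m : ℝ) := by
  intro n
  induction n with
  | zero =>
      intro m z hz
      simp only [Phi]
      match m with
      | 0 => simp
      | m + 1 =>
          simp [Nat.choose_eq_zero_of_lt (by omega : m + 1 + 0 - 1 < m + 1)]
  | succ n ih =>
      intro m z hz
      simp only [Phi]
      calc ‖∑ ij ∈ Finset.HasAntidiagonal.antidiagonal m, Phi f n ij.1 z * f ij.2 z‖
          ≤ ∑ ij ∈ Finset.HasAntidiagonal.antidiagonal m, ‖Phi f n ij.1 z‖ * ‖f ij.2 z‖ := by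
            refine (norm_sum_le _ _).trans (Finset.sum_le_sum fun ij _ => ?_)
            exact norm_mul_le _ _
        _ ≤ ∑ ij ∈ Finset.HasAntidiagonal.antidiagonal m,
              (C₀ ^ ij.1 * (r / 2) ^ n * (Nat.choose (ij.1 + n - 1) ij.1 : ℝ)) *
                (C₀ ^ ij.2 * r / 2) := by
            refine Finset.sum_le_sum fun ij _ => ?_
            exact mul_le_mul (ih ij.1 z hz) (hf ij.2 z hz) (norm_nonneg _) (by positivity)
        _ = C₀ ^ m * (r / 2) ^ (n + 1) *
              ∑ ij ∈ Finset.HasAntidiagonal.antidiagonal m, (Nat.choose (ij.1 + n - 1) ij.1 : ℝ) := by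
            rw [Finset.mul_sum]
            refine Finset.sum_congr rfl fun ij hij => ?_
            have hm : ij.1 + ij.2 = m := Finset.HasAntidiagonal.mem_antidiagonal.mp hij
            rw [← hm, pow_add, pow_succ]
            ring
        _ = C₀ ^ m * (r / 2) ^ (n + 1) * (Nat.choose (m + (n + 1) - 1) m : ℝ) := by
            rw [Finset.Nat.sum_antidiagonal_eq_sum_range_succ_mk, ← Nat.cast_sum,
              sum_choose_aux]
            have h3 : m + (n + 1) - 1 = m + n := by omega
            rw [h3]

lemma Phi_hasSum (r C₀ : ℝ) (hr : 0 < r) (hC₀ : 0 < C₀) (f : ℕ → ℂ → ℂ)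
    (hf : ∀ k, ∀ z ∈ Ddisc, ‖f k z‖ ≤ C₀ ^ k * r / 2)
    (x : ℂ) (hx : ‖x‖ < C₀⁻¹) (z : ℂ) (hz : z ∈ Ddisc) :
    ∀ n, (Summable fun m => ‖x ^ m * Phi f n m z‖) ∧
      HasSum (fun m => x ^ m * Phi f n m z) ((∑' k : ℕ, x ^ k * f k z) ^ n) := by
  have hxc : ‖x‖ * C₀ < 1 := by
    have := (mul_lt_mul_of_pos_right hx hC₀)
    rwa [inv_mul_cancel₀ hC₀.ne'] at this
  have ha : Summable fun k => ‖x ^ k * f k z‖ := by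
    refine Summable.of_nonneg_of_le (fun k => norm_nonneg _) (fun k => ?_)
      (((summable_geometric_of_lt_one (by positivity) hxc).mul_right (r / 2)))
    calc ‖x ^ k * f k z‖ ≤ ‖x‖ ^ k * (C₀ ^ k * r / 2) := by
          rw [norm_mul, norm_pow]
          exact mul_le_mul_of_nonneg_left (hf k z hz) (by positivity)
      _ = (‖x‖ * C₀) ^ k * (r / 2) := by rw [mul_pow]; ring
  intro n
  induction n with
  | zero =>
      have heq : (fun m => x ^ m * Phi f 0 m z) = fun m : ℕ => if m = 0 then 1 else 0 := by
        funext m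
        simp only [Phi]
        split_ifs with h
        · subst h; simp
        · simp
      constructor
      · refine summable_of_ne_finset_zero (s := {0}) fun m hm => ?_
        simp only [Finset.mem_singleton] at hm
        simp [Phi, hm]
      · rw [heq, pow_zero]
        exact hasSum_ite_eq 0 1
  | succ n ih =>
      obtain ⟨hbN, hbS⟩ := ih
      have key : ∀ m, x ^ m * Phi f (n + 1) m z =
          ∑ ij ∈ Finset.HasAntidiagonal.antidiagonal m,
            (x ^ ij.1 * Phi f n ij.1 z) * (x ^ ij.2 * f ij.2 z) := by
        intro m
        simp only [Phi]
        rw [Finset.mul_sum]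
        refine Finset.sum_congr rfl fun ij hij => ?_
        have hm : ij.1 + ij.2 = m := Finset.HasAntidiagonal.mem_antidiagonal.mp hij
        rw [← hm, pow_add]
        ring
      have hS' := summable_norm_sum_mul_antidiagonal_of_summable_norm hbN ha
      have hSN : Summable fun m => ‖x ^ m * Phi f (n + 1) m z‖ := by
        convert hS' using 2 with m
        rw [key]
      refine ⟨hSN, ?_⟩
      have h1 := (hS'.of_norm).hasSum
      have h2 := tsum_mul_tsum_eq_tsum_sum_antidiagonal_of_summable_norm hbN ha
      rw [← h2, hbS.tsum_eq] at h1
      have h3 : (∑' k : ℕ, x ^ k * f k z) ^ n * (∑' k : ℕ, x ^ k * f k z) =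
          (∑' k : ℕ, x ^ k * f k z) ^ (n + 1) := (pow_succ _ _).symm
      rw [h3] at h1
      exact h1.congr_fun fun m => key m

/-- If $\|f_k\|_\infty \le C_0^k r/2$ then the $n$-th power of the series
$\sum_k x^k f_k$ is itself a power series $\sum_m x^m \varphi_{m,n}$ in $x$ with bounded
analytic coefficients satisfying
$\|\varphi_{m,n}\|_\infty \le (C_0^m r^n/2^n)\binom{m+n-1}{m}$. -/
theorem power_of_series (r C₀ : ℝ) (hr : 0 < r) (hr1 : r < 1) (hC₀ : 0 < C₀)
    (f : ℕ → ℂ → ℂ)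
    (hf : ∀ k : ℕ, DifferentiableOn ℂ (f k) Ddisc ∧
      ∀ z ∈ Ddisc, ‖f k z‖ ≤ C₀ ^ k * r / 2) :
    ∃ Φ : ℕ → ℕ → ℂ → ℂ, ∀ n : ℕ, 1 ≤ n →
      (∀ m : ℕ, DifferentiableOn ℂ (Φ m n) Ddisc ∧
        ∀ z ∈ Ddisc, ‖Φ m n z‖ ≤ C₀ ^ m * r ^ n / 2 ^ n *
          (((m + n - 1).factorial : ℝ) / ((m.factorial : ℝ) * ((n - 1).factorial : ℝ)))) ∧
      ∀ x : ℂ, ‖x‖ < C₀⁻¹ → ∀ z ∈ Ddisc,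
        HasSum (fun m : ℕ => x ^ m * Φ m n z) ((∑' k : ℕ, x ^ k * f k z) ^ n) := by
  refine ⟨fun m n => Phi f n m, fun n hn => ⟨fun m => ⟨Phi_diff f (fun k => (hf k).1) n m,
    fun z hz => ?_⟩, fun x hx z hz => (Phi_hasSum r C₀ hr hC₀ f (fun k => (hf k).2) x hx z hz n).2⟩⟩
  have hb := Phi_bound r C₀ hr hC₀ f (fun k => (hf k).2) n m z hz
  refine hb.trans_eq ?_
  rw [div_pow, Nat.cast_choose ℝ (by omega : m ≤ m + n - 1)]
  have h1 : m + n - 1 - m = n - 1 := by omega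
  rw [h1]
  ring
end

section
/- Let N ≥ 1 and t₀ ∈ (0,1)^{4N} ∩ Ω (so each A_{t₀}^{(k)} is a positive invertible matrix and the family is irreducible), and let s₀ ∈ (0,1) ∪ (1,2). Then there exists R ∈ (0,1) such that for every ε > 0 there exists δ > 0 with the following property: for every s ∈ ℂ with |s − s₀| < δ, every t ∈ ℂ^{4N} with |t − t₀| < δ, every i ∈ {1,…,N}, and every n ≥ 0, ‖ψ_{A_t^{(i)},s} − ψ_{A_{t₀}^{(i)},s₀}‖_∞ · ‖φ_{A_t^{(i)}} − 1/2‖_∞^n + ‖ψ_{A_{t₀}^{(i)},s₀}‖_∞ · ‖(φ_{A_t^{(i)}} − 1/2)^n − (φ_{A_{t₀}^{(i)}} − 1/2)^n‖_∞ ≤ ε (R/2)^n, where ‖·‖_∞ denotes the supremum norm over D. -/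
open Set Metric

def Amat {α : Type*} (N : ℕ) (t : Fin (4*N) → α) (k : Fin N) : Matrix (Fin 2) (Fin 2) α :=
  Matrix.of ![![t ⟨4*k.1, by have := k.isLt; omega⟩, t ⟨4*k.1+1, by have := k.isLt; omega⟩],
    ![t ⟨4*k.1+2, by have := k.isLt; omega⟩, t ⟨4*k.1+3, by have := k.isLt; omega⟩]]

/-- $\psi_{A,s}(z) := w_A(z)^s$ if $|s| \le 1$, and
$\psi_{A,s}(z) := w_A(z)^{2-s}(\pm\det A)^{s-1}$ if $1 < |s|$, according to the sign of
$\mathrm{Re}(\det A)$; powers via the principal branch of log on the right half-plane. -/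
noncomputable def psiC (s : ℂ) (A : Matrix (Fin 2) (Fin 2) ℂ) (z : ℂ) : ℂ :=
  if ‖s‖ ≤ 1 then Complex.exp (s * Complex.log (wFun A z))
  else if 0 < A.det.re then
    Complex.exp ((2 - s) * Complex.log (wFun A z)) * Complex.exp ((s - 1) * Complex.log A.det)
  else
    Complex.exp ((2 - s) * Complex.log (wFun A z)) * Complex.exp ((s - 1) * Complex.log (-A.det))

/-- The set $\Omega$ of parameters $t \in \mathbb{C}^{4N}$: (i) $\mathrm{Re}\det A_t^{(k)} \neq 0$;
(ii) $\overline{\varphi_{A_t^{(k)}}(D)} \subset D$; (iii) $\overline{w_{A_t^{(k)}}(D)}$ lies in the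
open right half-plane; (iv) $\varphi_{A_t^{(i)}} \neq \varphi_{A_t^{(j)}}$ for some $i \neq j$. -/
def OmegaSet (N : ℕ) : Set (Fin (4*N) → ℂ) :=
  {t | (∀ k : Fin N, (Amat N t k).det.re ≠ 0) ∧
       (∀ k : Fin N, closure (phiFun (Amat N t k) '' Ddisc) ⊆ Ddisc) ∧
       (∀ k : Fin N, closure (wFun (Amat N t k) '' Ddisc) ⊆ {z : ℂ | 0 < z.re}) ∧
       (∃ i j : Fin N, i ≠ j ∧ ¬ Set.EqOn (phiFun (Amat N t i)) (phiFun (Amat N t j)) Ddisc)}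

/-- The supremum norm over $D$. -/
noncomputable def supD (f : ℂ → ℂ) : ℝ := sSup ((fun z => ‖f z‖) '' Ddisc)

set_option maxHeartbeats 1000000

-- aux lemmas
lemma half_mem_Ddisc : (1/2 : ℂ) ∈ Ddisc := by
  simp [Ddisc, Metric.mem_ball]

lemma isCompact_clD : IsCompact (closure Ddisc) :=
  Metric.isBounded_ball.isCompact_closure

lemma supD_nonneg (f : ℂ → ℂ) : 0 ≤ supD f :=
  Real.sSup_nonneg (by rintro x ⟨z, hz, rfl⟩; positivity)

lemma supD_le {f : ℂ → ℂ} {M : ℝ} (hM : 0 ≤ M) (h : ∀ z ∈ Ddisc, ‖f z‖ ≤ M) : supD f ≤ M :=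
  Real.sSup_le (by rintro x ⟨z, hz, rfl⟩; exact h z hz) hM

lemma norm_pow_sub_pow_le (a b : ℂ) (ρ : ℝ) (ha : ‖a‖ ≤ ρ) (hb : ‖b‖ ≤ ρ) (n : ℕ) :
    ‖a ^ n - b ^ n‖ ≤ n * ρ ^ (n - 1) * ‖a - b‖ := by
  have hρ : 0 ≤ ρ := le_trans (norm_nonneg a) ha
  induction n with
  | zero => simp
  | succ n ih =>
    have key : a ^ (n+1) - b ^ (n+1) = a * (a ^ n - b ^ n) + (a - b) * b ^ n := by ring
    have h1 : ‖a ^ (n+1) - b ^ (n+1)‖ ≤ ‖a‖ * ‖a ^ n - b ^ n‖ + ‖a - b‖ * ‖b ^ n‖ := by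
      rw [key]; exact (norm_add_le _ _).trans (by rw [norm_mul, norm_mul])
    have h2 : ‖a‖ * ‖a ^ n - b ^ n‖ ≤ ρ * (n * ρ ^ (n - 1) * ‖a - b‖) :=
      mul_le_mul ha ih (norm_nonneg _) hρ
    have h3 : ‖a - b‖ * ‖b ^ n‖ ≤ ‖a - b‖ * ρ ^ n := by
      apply mul_le_mul_of_nonneg_left _ (norm_nonneg _)
      rw [norm_pow]; exact pow_le_pow_left₀ (norm_nonneg _) hb n
    have h4 : ρ * (n * ρ ^ (n - 1) * ‖a - b‖) + ‖a - b‖ * ρ ^ n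
        ≤ (n+1 : ℕ) * ρ ^ ((n+1) - 1) * ‖a - b‖ := by
      cases n with
      | zero => simp
      | succ m =>
        push_cast
        have e : ρ * ((↑m + 1) * ρ ^ (m + 1 - 1) * ‖a - b‖) + ‖a - b‖ * ρ ^ (m + 1)
            = (↑m + 1 + 1) * ρ ^ (m + 1) * ‖a - b‖ := by
          rw [show m + 1 - 1 = m from rfl]; ring
        exact le_of_eq e
    calc ‖a ^ (n+1) - b ^ (n+1)‖ ≤ ‖a‖ * ‖a ^ n - b ^ n‖ + ‖a - b‖ * ‖b ^ n‖ := h1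
      _ ≤ ρ * (n * ρ ^ (n - 1) * ‖a - b‖) + ‖a - b‖ * ρ ^ n := add_le_add h2 h3
      _ ≤ (n+1 : ℕ) * ρ ^ ((n+1) - 1) * ‖a - b‖ := h4

-- entries of Amat
lemma Amat_00 {N : ℕ} (t : Fin (4*N) → ℂ) (k : Fin N) :
    Amat N t k 0 0 = t ⟨4*k.1, by have := k.isLt; omega⟩ := rfl
lemma Amat_01 {N : ℕ} (t : Fin (4*N) → ℂ) (k : Fin N) :
    Amat N t k 0 1 = t ⟨4*k.1+1, by have := k.isLt; omega⟩ := rfl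
lemma Amat_10 {N : ℕ} (t : Fin (4*N) → ℂ) (k : Fin N) :
    Amat N t k 1 0 = t ⟨4*k.1+2, by have := k.isLt; omega⟩ := rfl
lemma Amat_11 {N : ℕ} (t : Fin (4*N) → ℂ) (k : Fin N) :
    Amat N t k 1 1 = t ⟨4*k.1+3, by have := k.isLt; omega⟩ := rfl

lemma continuous_wA {N : ℕ} (i : Fin N) :
    Continuous (fun p : (Fin (4*N) → ℂ) × ℂ => wFun (Amat N p.1 i) p.2) := by
  simp only [wFun, Amat_00, Amat_01, Amat_10, Amat_11]
  fun_prop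

lemma continuous_numA {N : ℕ} (i : Fin N) :
    Continuous (fun p : (Fin (4*N) → ℂ) × ℂ =>
      (Amat N p.1 i 0 0 - Amat N p.1 i 0 1) * p.2 + Amat N p.1 i 0 1) := by
  simp only [Amat_00, Amat_01]
  fun_prop

lemma continuous_detA {N : ℕ} (i : Fin N) :
    Continuous (fun t : Fin (4*N) → ℂ => (Amat N t i).det) := by
  simp only [Matrix.det_fin_two, Amat_00, Amat_01, Amat_10, Amat_11]
  fun_prop


lemma exists_uniform (N : ℕ) (i : Fin N) (t₀C : Fin (4*N) → ℂ) (s₀ : ℝ)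
    (hdet : (Amat N t₀C i).det.re ≠ 0)
    (hw : ∀ z ∈ closure Ddisc, 0 < (wFun (Amat N t₀C i) z).re)
    (hs₀ : s₀ ∈ Set.Ioo (0:ℝ) 1 ∪ Set.Ioo (1:ℝ) 2)
    {η : ℝ} (hη : 0 < η) :
    ∃ δ > 0, ∀ s : ℂ, ‖s - (s₀:ℂ)‖ < δ → ∀ t : Fin (4*N) → ℂ, ‖t - t₀C‖ < δ →
      ∀ z ∈ closure Ddisc,
        ‖psiC s (Amat N t i) z - psiC (s₀:ℂ) (Amat N t₀C i) z‖ ≤ η ∧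
        ‖phiFun (Amat N t i) z - phiFun (Amat N t₀C i) z‖ ≤ η := by
  classical
  set q₀ : ℂ × (Fin (4*N) → ℂ) := ((s₀:ℂ), t₀C) with hq₀def
  -- continuity of the basic maps on the big product space
  have hwc : Continuous (fun q : (ℂ × (Fin (4*N) → ℂ)) × ℂ => wFun (Amat N q.1.2 i) q.2) :=
    by simp only [wFun, Amat_00, Amat_01, Amat_10, Amat_11]; fun_prop
  have hnumc : Continuous (fun q : (ℂ × (Fin (4*N) → ℂ)) × ℂ =>
      (Amat N q.1.2 i 0 0 - Amat N q.1.2 i 0 1) * q.2 + Amat N q.1.2 i 0 1) :=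
    by simp only [Amat_00, Amat_01]; fun_prop
  have hdetc : Continuous (fun q : (ℂ × (Fin (4*N) → ℂ)) × ℂ => (Amat N q.1.2 i).det) :=
    by simp only [Matrix.det_fin_two, Amat_00, Amat_01, Amat_10, Amat_11]; fun_prop
  -- tube lemma for positivity of Re ∘ w
  have hVopen : IsOpen {q : (ℂ × (Fin (4*N) → ℂ)) × ℂ | 0 < (wFun (Amat N q.1.2 i) q.2).re} :=
    isOpen_lt continuous_const (Complex.continuous_re.comp hwc)
  have hsub : ({q₀} : Set (ℂ × (Fin (4*N) → ℂ))) ×ˢ closure Ddisc ⊆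
      {q : (ℂ × (Fin (4*N) → ℂ)) × ℂ | 0 < (wFun (Amat N q.1.2 i) q.2).re} := by
    rintro ⟨p, z⟩ ⟨hp, hz⟩
    rcases hp with rfl
    exact hw z hz
  obtain ⟨u, v, huo, hvo, hqu, hDv, huv⟩ :=
    generalized_tube_lemma isCompact_singleton isCompact_clD hVopen hsub
  have hq₀u : q₀ ∈ u := hqu rfl
  have hwpos : ∀ p ∈ u, ∀ z ∈ closure Ddisc, 0 < (wFun (Amat N p.2 i) z).re :=
    by
    intro p hp z hz
    have h1 : ((p, z) : (ℂ × (Fin (4*N) → ℂ)) × ℂ) ∈ u ×ˢ v := Set.mk_mem_prod hp (hDv hz)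
    have h2 := huv h1
    exact h2
  -- continuity helpers at points with positive real part of w
  have hlogw : ∀ q : (ℂ × (Fin (4*N) → ℂ)) × ℂ, q.1 ∈ u → q.2 ∈ closure Ddisc →
      ContinuousAt (fun q : (ℂ × (Fin (4*N) → ℂ)) × ℂ =>
        Complex.log (wFun (Amat N q.1.2 i) q.2)) q := by
    intro q hqu' hqz
    exact hwc.continuousAt.clog (Or.inl (hwpos _ hqu' _ hqz))
  have hφat : ∀ q : (ℂ × (Fin (4*N) → ℂ)) × ℂ, q.1 ∈ u → q.2 ∈ closure Ddisc →
      ContinuousAt (fun q : (ℂ × (Fin (4*N) → ℂ)) × ℂ =>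
        phiFun (Amat N q.1.2 i) q.2) q := by
    intro q hqu' hqz
    have hwne : wFun (Amat N q.1.2 i) q.2 ≠ 0 := by
      intro h
      have h2 := hwpos _ hqu' _ hqz
      rw [h] at h2; simp at h2
    exact ContinuousAt.div hnumc.continuousAt hwc.continuousAt hwne
  -- find an open set U ∋ q₀ on which the pair map is continuous
  have hU : ∃ U : Set (ℂ × (Fin (4*N) → ℂ)), IsOpen U ∧ q₀ ∈ U ∧ U ⊆ u ∧
      ContinuousOn (fun q : (ℂ × (Fin (4*N) → ℂ)) × ℂ =>
        ((psiC q.1.1 (Amat N q.1.2 i) q.2, phiFun (Amat N q.1.2 i) q.2) : ℂ × ℂ))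
        (U ×ˢ closure Ddisc) := by
    rcases hs₀ with hs₁ | hs₂
    · -- |s₀| < 1 : first branch of psiC
      refine ⟨u ∩ {p : ℂ × (Fin (4*N) → ℂ) | ‖p.1‖ < 1},
        huo.inter (isOpen_lt (continuous_norm.comp continuous_fst) continuous_const),
        ⟨hq₀u, ?_⟩, inter_subset_left, ?_⟩
      · show ‖(s₀:ℂ)‖ < 1
        rw [Complex.norm_real, Real.norm_eq_abs, abs_of_pos hs₁.1]
        exact hs₁.2
      · apply ContinuousOn.prodMk
        · apply ContinuousOn.congr (f := fun q : (ℂ × (Fin (4*N) → ℂ)) × ℂ =>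
            Complex.exp (q.1.1 * Complex.log (wFun (Amat N q.1.2 i) q.2)))
          · intro q hq
            exact (((continuous_fst.fst.continuousAt).mul
              (hlogw q hq.1.1 hq.2)).cexp).continuousWithinAt
          · intro q hq
            have hle : ‖q.1.1‖ ≤ 1 := le_of_lt hq.1.2
            simp only [psiC, if_pos hle]
        · intro q hq
          exact (hφat q hq.1.1 hq.2).continuousWithinAt
    · -- 1 < s₀ < 2 : second/third branch, according to sign of Re det
      rcases lt_or_gt_of_ne hdet with hneg | hpos
      · -- Re det < 0
        refine ⟨(u ∩ {p : ℂ × (Fin (4*N) → ℂ) | 1 < ‖p.1‖})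
            ∩ {p : ℂ × (Fin (4*N) → ℂ) | (Amat N p.2 i).det.re < 0},
          ((huo.inter (isOpen_lt continuous_const
            (continuous_norm.comp continuous_fst))).inter
            (isOpen_lt (Complex.continuous_re.comp ((continuous_detA i).comp continuous_snd))
              continuous_const)),
          ⟨⟨hq₀u, ?_⟩, hneg⟩, fun p hp => hp.1.1, ?_⟩
        · show (1:ℝ) < ‖(s₀:ℂ)‖
          rw [Complex.norm_real, Real.norm_eq_abs, abs_of_pos (lt_trans one_pos hs₂.1)]
          exact hs₂.1
        · apply ContinuousOn.prodMk
          · apply ContinuousOn.congr (f := fun q : (ℂ × (Fin (4*N) → ℂ)) × ℂ =>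
              Complex.exp ((2 - q.1.1) * Complex.log (wFun (Amat N q.1.2 i) q.2)) *
              Complex.exp ((q.1.1 - 1) * Complex.log (-(Amat N q.1.2 i).det)))
            · intro q hq
              have hd : 0 < (-(Amat N q.1.2 i).det).re := by
                have h3 := hq.1.2
                simp only [Complex.neg_re]
                simp only [Set.mem_setOf_eq] at h3
                linarith
              have hlogd : ContinuousAt (fun q : (ℂ × (Fin (4*N) → ℂ)) × ℂ =>
                  Complex.log (-(Amat N q.1.2 i).det)) q :=
                (hdetc.neg.continuousAt).clog (Or.inl hd)
              exact (((((continuous_const.sub continuous_fst.fst).continuousAt).mul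
                (hlogw q hq.1.1.1 hq.2)).cexp).mul
                ((((continuous_fst.fst.sub continuous_const).continuousAt).mul
                  hlogd).cexp)).continuousWithinAt
            · intro q hq
              have hgt : ¬ ‖q.1.1‖ ≤ 1 := not_le.mpr hq.1.1.2
              have hnd : ¬ (0:ℝ) < (Amat N q.1.2 i).det.re := not_lt.mpr (le_of_lt hq.1.2)
              simp only [psiC, if_neg hgt, if_neg hnd]
          · intro q hq
            exact (hφat q hq.1.1.1 hq.2).continuousWithinAt
      · -- Re det > 0
        refine ⟨(u ∩ {p : ℂ × (Fin (4*N) → ℂ) | 1 < ‖p.1‖})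
            ∩ {p : ℂ × (Fin (4*N) → ℂ) | 0 < (Amat N p.2 i).det.re},
          ((huo.inter (isOpen_lt continuous_const
            (continuous_norm.comp continuous_fst))).inter
            (isOpen_lt continuous_const
              (Complex.continuous_re.comp ((continuous_detA i).comp continuous_snd)))),
          ⟨⟨hq₀u, ?_⟩, hpos⟩, fun p hp => hp.1.1, ?_⟩
        · show (1:ℝ) < ‖(s₀:ℂ)‖
          rw [Complex.norm_real, Real.norm_eq_abs, abs_of_pos (lt_trans one_pos hs₂.1)]
          exact hs₂.1
        · apply ContinuousOn.prodMk
          · apply ContinuousOn.congr (f := fun q : (ℂ × (Fin (4*N) → ℂ)) × ℂ =>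
              Complex.exp ((2 - q.1.1) * Complex.log (wFun (Amat N q.1.2 i) q.2)) *
              Complex.exp ((q.1.1 - 1) * Complex.log ((Amat N q.1.2 i).det)))
            · intro q hq
              have h5 : (0:ℝ) < (Amat N q.1.2 i).det.re := hq.1.2
              have hlogd : ContinuousAt (fun q : (ℂ × (Fin (4*N) → ℂ)) × ℂ =>
                  Complex.log ((Amat N q.1.2 i).det)) q :=
                hdetc.continuousAt.clog (Or.inl h5)
              exact (((((continuous_const.sub continuous_fst.fst).continuousAt).mul
                (hlogw q hq.1.1.1 hq.2)).cexp).mul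
                ((((continuous_fst.fst.sub continuous_const).continuousAt).mul
                  hlogd).cexp)).continuousWithinAt
            · intro q hq
              have hgt : ¬ ‖q.1.1‖ ≤ 1 := not_le.mpr hq.1.1.2
              have h5 : 0 < (Amat N q.1.2 i).det.re := hq.1.2
              simp only [psiC, if_neg hgt, if_pos h5]
          · intro q hq
            exact (hφat q hq.1.1.1 hq.2).continuousWithinAt
  obtain ⟨U, hUo, hq₀U, hUu, hFcont⟩ := hU
  obtain ⟨v', hv'mem, hv'⟩ := IsCompact.mem_uniformity_of_prod
    (f := fun (p : ℂ × (Fin (4*N) → ℂ)) (z : ℂ) =>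
      ((psiC p.1 (Amat N p.2 i) z, phiFun (Amat N p.2 i) z) : ℂ × ℂ))
    isCompact_clD hFcont hq₀U (dist_mem_uniformity hη)
  rw [hUo.nhdsWithin_eq hq₀U] at hv'mem
  obtain ⟨δ, hδpos, hball⟩ := Metric.mem_nhds_iff.mp hv'mem
  refine ⟨δ, hδpos, ?_⟩
  intro s hs t ht z hz
  have hmem : ((s, t) : ℂ × (Fin (4*N) → ℂ)) ∈ Metric.ball q₀ δ := by
    rw [mem_ball, Prod.dist_eq]
    apply max_lt
    · rwa [dist_eq_norm]
    · rwa [dist_eq_norm]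
  have hres := hv' (s, t) (hball hmem) z hz
  have hd : dist (psiC s (Amat N t i) z) (psiC (s₀:ℂ) (Amat N t₀C i) z) < η ∧
      dist (phiFun (Amat N t i) z) (phiFun (Amat N t₀C i) z) < η := by
    simp only [Set.mem_setOf_eq, Prod.dist_eq, max_lt_iff, sup_lt_iff] at hres
    exact hres
  constructor
  · rw [← dist_eq_norm]; exact hd.1.le
  · rw [← dist_eq_norm]; exact hd.2.le

/-- Joint continuity estimate for the weighted composition operator data:
near $(s_0, t_0)$ with $t_0 \in (0,1)^{4N} \cap \Omega$, the combination of sup norms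
appearing in the operator-norm estimate is bounded by $\varepsilon (R/2)^n$. -/
theorem operator_continuity_estimate (N : ℕ) (hN : 1 ≤ N) (t₀ : Fin (4*N) → ℝ)
    (ht₀ : ∀ i, t₀ i ∈ Set.Ioo (0 : ℝ) 1)
    (hΩ : (fun i => (t₀ i : ℂ)) ∈ OmegaSet N)
    (s₀ : ℝ) (hs₀ : s₀ ∈ Set.Ioo (0 : ℝ) 1 ∪ Set.Ioo (1 : ℝ) 2) :
    ∃ R ∈ Set.Ioo (0 : ℝ) 1, ∀ ε : ℝ, 0 < ε → ∃ δ : ℝ, 0 < δ ∧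
      ∀ s : ℂ, ‖s - (s₀ : ℂ)‖ < δ →
        ∀ t : Fin (4*N) → ℂ, ‖t - (fun i => (t₀ i : ℂ))‖ < δ →
          ∀ i : Fin N, ∀ n : ℕ,
            supD (fun z => psiC s (Amat N t i) z
                - psiC (s₀ : ℂ) (Amat N (fun j => (t₀ j : ℂ)) i) z)
                * supD (fun z => phiFun (Amat N t i) z - 1/2) ^ n
              + supD (psiC (s₀ : ℂ) (Amat N (fun j => (t₀ j : ℂ)) i))
                * supD (fun z => (phiFun (Amat N t i) z - 1/2) ^ n
                    - (phiFun (Amat N (fun j => (t₀ j : ℂ)) i) z - 1/2) ^ n)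
              ≤ ε * (R / 2) ^ n := by
  classical
  obtain ⟨hdet, hφim, hwim, -⟩ := hΩ
  set t₀C : Fin (4*N) → ℂ := fun j => (t₀ j : ℂ) with ht₀Cdef
  haveI : NeZero N := ⟨by omega⟩
  have hNE : (Finset.univ : Finset (Fin N)).Nonempty := Finset.univ_nonempty
  have i0 : Fin N := ⟨0, by omega⟩
  -- positivity of Re ∘ w at t₀ on the closed disc
  have hw : ∀ i : Fin N, ∀ z ∈ closure Ddisc, 0 < (wFun (Amat N t₀C i) z).re := by
    intro i z hz
    have hc : Continuous (wFun (Amat N t₀C i)) := by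
      unfold wFun; fun_prop
    have himg : wFun (Amat N t₀C i) '' closure Ddisc ⊆
        closure (wFun (Amat N t₀C i) '' Ddisc) := image_closure_subset_closure_image hc
    exact hwim i (himg ⟨z, hz, rfl⟩)
  -- radius bound for φ at t₀
  have hri : ∀ i : Fin N, ∃ r : ℝ, 0 ≤ r ∧ r < 1/2 ∧
      ∀ z ∈ Ddisc, ‖phiFun (Amat N t₀C i) z - 1/2‖ ≤ r := by
    intro i
    have hSne : (closure (phiFun (Amat N t₀C i) '' Ddisc)).Nonempty :=
      (Set.Nonempty.image _ ⟨_, half_mem_Ddisc⟩).closure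
    have hSb : Bornology.IsBounded (closure (phiFun (Amat N t₀C i) '' Ddisc)) :=
      Metric.isBounded_ball.subset (hφim i)
    have hScomp : IsCompact (closure (phiFun (Amat N t₀C i) '' Ddisc)) :=
      Metric.isCompact_of_isClosed_isBounded isClosed_closure hSb
    obtain ⟨x₀, hx₀S, hmax⟩ := hScomp.exists_isMaxOn hSne
      ((continuous_id.dist continuous_const).continuousOn
        (f := fun z : ℂ => dist z (1/2 : ℂ)))
    refine ⟨dist x₀ (1/2 : ℂ), dist_nonneg, ?_, ?_⟩
    · have hmem := hφim i hx₀S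
      rwa [Ddisc, mem_ball] at hmem
    · intro z hz
      rw [show (‖phiFun (Amat N t₀C i) z - 1/2‖ : ℝ)
        = dist (phiFun (Amat N t₀C i) z) (1/2 : ℂ) from (dist_eq_norm _ _).symm]
      exact hmax (subset_closure ⟨z, hz, rfl⟩)
  choose r hr0 hrlt hrbound using hri
  set r₀ := Finset.univ.sup' hNE r with hr₀def
  clear_value r₀
  have hr₀lt : r₀ < 1/2 := by
    rw [hr₀def]; exact (Finset.sup'_lt_iff hNE).mpr (fun i _ => hrlt i)
  have hrle : ∀ i, r i ≤ r₀ := by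
    intro i; rw [hr₀def]; exact Finset.le_sup' r (Finset.mem_univ i)
  have hr₀0 : 0 ≤ r₀ := le_trans (hr0 i0) (hrle i0)
  set R := r₀ + 1/2 with hRdef
  clear_value R
  have hRpos : 0 < R := by linarith
  refine ⟨R, ⟨by linarith, by linarith⟩, ?_⟩
  set ρ := (r₀ + R/2)/2 with hρdef
  clear_value ρ
  have hρ1 : r₀ < ρ := by rw [hρdef, hRdef]; linarith
  have hρ2 : ρ < R/2 := by rw [hρdef, hRdef]; linarith
  have hρpos : 0 < ρ := lt_of_le_of_lt hr₀0 hρ1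
  set q := ρ / (R/2) with hqdef
  clear_value q
  have hR2 : (0:ℝ) < R/2 := by linarith
  have hqpos : 0 < q := by rw [hqdef]; exact div_pos hρpos hR2
  have hqlt1 : q < 1 := by rw [hqdef]; exact (div_lt_one hR2).mpr hρ2
  have hρq : ρ = q * (R/2) := by
    rw [hqdef]; exact (div_mul_cancel₀ ρ hR2.ne').symm
  obtain ⟨M, hM⟩ := (tendsto_self_mul_const_pow_of_lt_one hqpos.le hqlt1).bddAbove_range
  have hMn : ∀ n : ℕ, (n:ℝ) * q ^ n ≤ M := fun n => hM ⟨n, rfl⟩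
  have hM0 : 0 ≤ M := by have := hMn 0; simpa using this
  set K := M / q * (2 / R) with hKdef
  clear_value K
  have hK0 : 0 ≤ K := by
    rw [hKdef]
    exact mul_nonneg (div_nonneg hM0 hqpos.le) (div_nonneg (by norm_num) hRpos.le)
  have hK : ∀ n : ℕ, (n:ℝ) * ρ ^ (n-1) ≤ K * (R/2)^n := by
    intro n
    cases n with
    | zero => simpa using hK0
    | succ m =>
      have h1 : ((m:ℝ)+1) * q ^ m ≤ M / q := by
        rw [le_div_iff₀ hqpos]
        calc ((m:ℝ)+1) * q^m * q = ((m+1:ℕ):ℝ) * q^(m+1) := by push_cast; ring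
          _ ≤ M := hMn (m+1)
      have h2 : K * (R/2)^(m+1) = M / q * (R/2)^m := by
        have hqne : q ≠ 0 := hqpos.ne'
        have hRne : R ≠ 0 := hRpos.ne'
        rw [hKdef, pow_succ]
        field_simp
      calc ((m+1:ℕ):ℝ) * ρ ^ (m+1-1) = (((m:ℝ)+1) * q^m) * (R/2)^m := by
            rw [show m+1-1 = m from rfl, hρq, mul_pow]; push_cast; ring
        _ ≤ (M/q) * (R/2)^m :=
            mul_le_mul_of_nonneg_right h1 (pow_nonneg (by linarith) m)
        _ = K * (R/2)^(m+1) := h2.symm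
  set C := Finset.univ.sup' hNE (fun i => supD (psiC (s₀:ℂ) (Amat N t₀C i))) with hCdef
  clear_value C
  have hCi : ∀ i, supD (psiC (s₀:ℂ) (Amat N t₀C i)) ≤ C := by
    intro i
    rw [hCdef]
    exact Finset.le_sup' (fun i => supD (psiC (s₀:ℂ) (Amat N t₀C i))) (Finset.mem_univ i)
  have hC0 : 0 ≤ C := le_trans (supD_nonneg _) (hCi i0)
  intro ε hε
  set η := min (ε/2) (min (ρ - r₀) (ε / (2 * (C+1) * (K+1)))) with hηdef
  clear_value η
  have hC1pos : (0:ℝ) < C + 1 := by linarith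
  have hK1pos : (0:ℝ) < K + 1 := by linarith
  have hηpos : 0 < η := by
    rw [hηdef]
    apply lt_min (by linarith)
    apply lt_min (by linarith)
    exact div_pos hε (by positivity)
  have hδi : ∀ i : Fin N, ∃ δ > 0, ∀ s : ℂ, ‖s - (s₀:ℂ)‖ < δ →
      ∀ t : Fin (4*N) → ℂ, ‖t - t₀C‖ < δ → ∀ z ∈ closure Ddisc,
        ‖psiC s (Amat N t i) z - psiC (s₀:ℂ) (Amat N t₀C i) z‖ ≤ η ∧
        ‖phiFun (Amat N t i) z - phiFun (Amat N t₀C i) z‖ ≤ η :=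
    fun i => exists_uniform N i t₀C s₀ (hdet i) (hw i) hs₀ hηpos
  choose δf hδfpos hδf using hδi
  refine ⟨Finset.univ.inf' hNE δf, (Finset.lt_inf'_iff hNE).mpr (fun i _ => hδfpos i), ?_⟩
  intro s hs t ht i n
  have hδle : Finset.univ.inf' hNE δf ≤ δf i := Finset.inf'_le _ (Finset.mem_univ i)
  have hkey := hδf i s (lt_of_lt_of_le hs hδle) t (lt_of_lt_of_le ht hδle)
  have hψb : ∀ z ∈ Ddisc, ‖psiC s (Amat N t i) z - psiC (s₀:ℂ) (Amat N t₀C i) z‖ ≤ η :=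
    fun z hz => (hkey z (subset_closure hz)).1
  have hφb : ∀ z ∈ Ddisc, ‖phiFun (Amat N t i) z - phiFun (Amat N t₀C i) z‖ ≤ η :=
    fun z hz => (hkey z (subset_closure hz)).2
  have hηρ : η ≤ ρ - r₀ := by
    rw [hηdef]; exact le_trans (min_le_right _ _) (min_le_left _ _)
  have hηε2 : η ≤ ε/2 := by rw [hηdef]; exact min_le_left _ _
  have hηK : η ≤ ε / (2*(C+1)*(K+1)) := by
    rw [hηdef]; exact le_trans (min_le_right _ _) (min_le_right _ _)
  -- pointwise bound on φ_t - 1/2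
  have hφρ : ∀ z ∈ Ddisc, ‖phiFun (Amat N t i) z - 1/2‖ ≤ ρ := by
    intro z hz
    have he : phiFun (Amat N t i) z - 1/2 =
        (phiFun (Amat N t i) z - phiFun (Amat N t₀C i) z) +
        (phiFun (Amat N t₀C i) z - 1/2) := by ring
    rw [he]
    refine (norm_add_le _ _).trans ?_
    have h3 := hφb z hz
    have h4 := hrbound i z hz
    have h5 := hrle i
    linarith
  -- term 1
  have hsup1 : supD (fun z => phiFun (Amat N t i) z - 1/2) ≤ R/2 :=
    supD_le (by linarith) (fun z hz => (hφρ z hz).trans hρ2.le)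
  have hterm1 : supD (fun z => psiC s (Amat N t i) z - psiC (s₀:ℂ) (Amat N t₀C i) z)
      * supD (fun z => phiFun (Amat N t i) z - 1/2) ^ n ≤ (ε/2) * (R/2)^n := by
    apply mul_le_mul
    · exact (supD_le (by linarith) hψb).trans hηε2
    · exact pow_le_pow_left₀ (supD_nonneg _) hsup1 n
    · exact pow_nonneg (supD_nonneg _) n
    · linarith
  -- term 2
  have hpw : ∀ z ∈ Ddisc, ‖(phiFun (Amat N t i) z - 1/2)^n -
      (phiFun (Amat N t₀C i) z - 1/2)^n‖ ≤ (n:ℝ) * ρ^(n-1) * η := by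
    intro z hz
    have h1 := norm_pow_sub_pow_le (phiFun (Amat N t i) z - 1/2)
      (phiFun (Amat N t₀C i) z - 1/2) ρ (hφρ z hz)
      ((hrbound i z hz).trans ((hrle i).trans hρ1.le)) n
    refine h1.trans ?_
    apply mul_le_mul_of_nonneg_left _ (by positivity)
    have he : (phiFun (Amat N t i) z - 1/2) - (phiFun (Amat N t₀C i) z - 1/2)
      = phiFun (Amat N t i) z - phiFun (Amat N t₀C i) z := by ring
    rw [he]
    exact hφb z hz
  have hsup2 : supD (fun z => (phiFun (Amat N t i) z - 1/2)^n -
      (phiFun (Amat N t₀C i) z - 1/2)^n) ≤ (n:ℝ) * ρ^(n-1) * η :=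
    supD_le (by positivity) hpw
  have hterm2 : supD (psiC (s₀:ℂ) (Amat N t₀C i))
      * supD (fun z => (phiFun (Amat N t i) z - 1/2)^n -
        (phiFun (Amat N t₀C i) z - 1/2)^n) ≤ (ε/2) * (R/2)^n := by
    have hA : supD (psiC (s₀:ℂ) (Amat N t₀C i))
        * supD (fun z => (phiFun (Amat N t i) z - 1/2)^n -
          (phiFun (Amat N t₀C i) z - 1/2)^n)
        ≤ (C+1) * (((K+1) * (R/2)^n) * η) := by
      apply mul_le_mul ((hCi i).trans (by linarith)) (hsup2.trans ?_) (supD_nonneg _)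
        (by linarith)
      have h6 : (n:ℝ) * ρ^(n-1) ≤ (K+1) * (R/2)^n := by
        refine (hK n).trans ?_
        apply mul_le_mul_of_nonneg_right (by linarith) (pow_nonneg (by linarith) n)
      apply mul_le_mul_of_nonneg_right h6 hηpos.le
    refine hA.trans ?_
    have hB : (C+1) * (((K+1) * (R/2)^n) * η)
        ≤ (C+1) * (((K+1) * (R/2)^n) * (ε / (2*(C+1)*(K+1)))) := by
      apply mul_le_mul_of_nonneg_left _ (by linarith)
      apply mul_le_mul_of_nonneg_left hηK
      apply mul_nonneg (by linarith) (pow_nonneg (by linarith) n)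
    refine hB.trans (le_of_eq ?_)
    have hC1 : (C:ℝ)+1 ≠ 0 := by linarith
    have hK1 : (K:ℝ)+1 ≠ 0 := by linarith
    field_simp
  calc supD (fun z => psiC s (Amat N t i) z - psiC (s₀:ℂ) (Amat N t₀C i) z)
        * supD (fun z => phiFun (Amat N t i) z - 1/2) ^ n
      + supD (psiC (s₀:ℂ) (Amat N t₀C i))
        * supD (fun z => (phiFun (Amat N t i) z - 1/2)^n -
          (phiFun (Amat N t₀C i) z - 1/2)^n)
      ≤ (ε/2) * (R/2)^n + (ε/2) * (R/2)^n := add_le_add hterm1 hterm2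
    _ = ε * (R/2)^n := by ring
end

section
/- Let D be the open disc in ℂ of radius 1/2 centred at 1/2, let Γ ⊆ D ∩ ℝ be a compact infinite set, and let f : D → ℂ be holomorphic with f(z) ∈ ℝ for every z ∈ Γ. Then every Taylor coefficient of f at the centre 1/2 is real; equivalently, f(conj(z)) = conj(f(z)) for all z ∈ D. -/
open Set Metric Complex Filter

private lemma conj_tendsto_punctured (z : ℂ) :
    Tendsto (starRingEnd ℂ) (nhdsWithin z {z}ᶜ)
      (nhdsWithin ((starRingEnd ℂ) z) {(starRingEnd ℂ) z}ᶜ) := by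
  simp only [nhdsWithin]
  rw [tendsto_inf]
  constructor
  · exact (Complex.continuous_conj.tendsto z).mono_left nhdsWithin_le_nhds
  · rw [tendsto_principal]
    filter_upwards [self_mem_nhdsWithin] with w hw
    simp only [mem_compl_iff, mem_singleton_iff] at hw ⊢
    exact fun h => hw ((starRingEnd ℂ).injective h)

private lemma hasDerivAt_conj_conj {f : ℂ → ℂ} {f' z : ℂ}
    (hf : HasDerivAt f f' ((starRingEnd ℂ) z)) :
    HasDerivAt (fun w => (starRingEnd ℂ) (f ((starRingEnd ℂ) w))) ((starRingEnd ℂ) f') z := by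
  rw [hasDerivAt_iff_tendsto_slope] at hf ⊢
  have h1 : Tendsto (fun w => slope f ((starRingEnd ℂ) z) ((starRingEnd ℂ) w))
      (nhdsWithin z {z}ᶜ) (nhds f') := hf.comp (conj_tendsto_punctured z)
  have h2 := (Complex.continuous_conj.tendsto f').comp h1
  refine h2.congr' ?_
  filter_upwards [eventually_mem_nhdsWithin] with w hw
  simp only [mem_compl_iff, mem_singleton_iff] at hw
  simp only [Function.comp, slope_def_field]
  rw [map_div₀, map_sub, map_sub, Complex.conj_conj, Complex.conj_conj]

private lemma differentiableAt_conj_conj {f : ℂ → ℂ} {z : ℂ}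
    (hf : DifferentiableAt ℂ f ((starRingEnd ℂ) z)) :
    DifferentiableAt ℂ (fun w => (starRingEnd ℂ) (f ((starRingEnd ℂ) w))) z :=
  (hasDerivAt_conj_conj hf.hasDerivAt).differentiableAt

private lemma deriv_conj_conj_aux (f : ℂ → ℂ) (z : ℂ) :
    deriv (fun w => (starRingEnd ℂ) (f ((starRingEnd ℂ) w))) z
      = (starRingEnd ℂ) (deriv f ((starRingEnd ℂ) z)) := by
  by_cases hf : DifferentiableAt ℂ f ((starRingEnd ℂ) z)
  · exact (hasDerivAt_conj_conj hf.hasDerivAt).deriv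
  · rw [deriv_zero_of_not_differentiableAt hf, map_zero,
      deriv_zero_of_not_differentiableAt]
    intro hg
    apply hf
    have := differentiableAt_conj_conj (z := (starRingEnd ℂ) z) (by simpa using hg)
    simpa using this

private lemma iteratedDeriv_conj_conj (f : ℂ → ℂ) (k : ℕ) (z : ℂ) :
    iteratedDeriv k (fun w => (starRingEnd ℂ) (f ((starRingEnd ℂ) w))) z
      = (starRingEnd ℂ) (iteratedDeriv k f ((starRingEnd ℂ) z)) := by
  induction k generalizing z with
  | zero => simp
  | succ k ih =>
    rw [iteratedDeriv_succ, iteratedDeriv_succ]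
    have : deriv (iteratedDeriv k (fun w => (starRingEnd ℂ) (f ((starRingEnd ℂ) w)))) z
        = deriv (fun w => (starRingEnd ℂ) ((iteratedDeriv k f) ((starRingEnd ℂ) w))) z := by
      congr 1
      funext w
      exact ih w
    rw [this, deriv_conj_conj_aux]

/-- If `f` is holomorphic on the disc `D` of radius 1/2 centred at 1/2 and
real-valued on a compact infinite subset `Γ ⊆ D ∩ ℝ`, then all Taylor coefficients of `f`
at `1/2` are real; equivalently `f(conj z) = conj (f z)` on `D`. -/
theorem real_on_compact_infinite_implies_real_coefficients
    (f : ℂ → ℂ) (hf : DifferentiableOn ℂ f (ball (1/2 : ℂ) (1/2)))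
    (Γ : Set ℂ) (hΓD : Γ ⊆ ball (1/2 : ℂ) (1/2)) (hΓreal : ∀ z ∈ Γ, z.im = 0)
    (hΓcompact : IsCompact Γ) (hΓinfinite : Γ.Infinite)
    (hfreal : ∀ z ∈ Γ, (f z).im = 0) :
    (∀ k : ℕ, (iteratedDeriv k f (1/2 : ℂ)).im = 0) ∧
    ∀ z ∈ ball (1/2 : ℂ) (1/2), f (starRingEnd ℂ z) = starRingEnd ℂ (f z) := by
  have hc2 : (starRingEnd ℂ) (1/2 : ℂ) = 1/2 := by
    rw [Complex.conj_eq_iff_im]; simp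
  set g : ℂ → ℂ := fun w => (starRingEnd ℂ) (f ((starRingEnd ℂ) w)) with hg_def
  have hball : ∀ z : ℂ, z ∈ ball (1/2 : ℂ) (1/2) → (starRingEnd ℂ) z ∈ ball (1/2 : ℂ) (1/2) := by
    intro z hz
    simp only [mem_ball, dist_eq] at hz ⊢
    have : (starRingEnd ℂ) z - 1/2 = (starRingEnd ℂ) (z - 1/2) := by
      rw [map_sub, hc2]
    rw [this, Complex.norm_conj]
    exact hz
  have hgdiff : DifferentiableOn ℂ g (ball (1/2 : ℂ) (1/2)) := by
    intro z hz
    have hfz : DifferentiableAt ℂ f ((starRingEnd ℂ) z) :=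
      hf.differentiableAt (isOpen_ball.mem_nhds (hball z hz))
    exact (differentiableAt_conj_conj hfz).differentiableWithinAt
  have hAf := hf.analyticOnNhd isOpen_ball
  have hAg := hgdiff.analyticOnNhd isOpen_ball
  -- accumulation point
  obtain ⟨z₀, hz₀Γ, hacc⟩ :=
    hΓinfinite.exists_accPt_of_subset_isCompact hΓcompact subset_rfl
  have hfg_on_Γ : ∀ w ∈ Γ, f w = g w := by
    intro w hw
    have hwr : (starRingEnd ℂ) w = w := Complex.conj_eq_iff_im.mpr (hΓreal w hw)
    simp only [hg_def, hwr]
    exact (Complex.conj_eq_iff_im.mpr (hfreal w hw)).symm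
  have hfreq : ∃ᶠ w in nhdsWithin z₀ {z₀}ᶜ, f w = g w := by
    have h := (accPt_iff_frequently (x := z₀) (C := Γ)).mp hacc
    rw [frequently_iff] at h ⊢
    intro U hU
    rw [mem_nhdsWithin_iff_exists_mem_nhds_inter] at hU
    obtain ⟨V, hV, hVU⟩ := hU
    obtain ⟨w, hwV, hwne, hwΓ⟩ := h hV
    exact ⟨w, hVU ⟨hwV, hwne⟩, hfg_on_Γ w hwΓ⟩
  have hEq : EqOn f g (ball (1/2 : ℂ) (1/2)) :=
    hAf.eqOn_of_preconnected_of_frequently_eq hAg (convex_ball _ _).isPreconnected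
      (hΓD hz₀Γ) hfreq
  have hhalf : (1/2 : ℂ) ∈ ball (1/2 : ℂ) (1/2) := mem_ball_self (by norm_num)
  constructor
  · intro k
    have hev : f =ᶠ[nhds (1/2 : ℂ)] g :=
      eventuallyEq_iff_exists_mem.mpr ⟨ball (1/2 : ℂ) (1/2), isOpen_ball.mem_nhds hhalf, hEq⟩
    have h1 : iteratedDeriv k f (1/2 : ℂ) = iteratedDeriv k g (1/2 : ℂ) :=
      hev.iteratedDeriv_eq k
    have h2 : iteratedDeriv k g (1/2 : ℂ)
        = (starRingEnd ℂ) (iteratedDeriv k f (1/2 : ℂ)) := by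
      have := iteratedDeriv_conj_conj f k (1/2 : ℂ)
      rwa [hc2] at this
    have : (starRingEnd ℂ) (iteratedDeriv k f (1/2 : ℂ)) = iteratedDeriv k f (1/2 : ℂ) :=
      (h1.trans h2).symm
    exact Complex.conj_eq_iff_im.mp this
  · intro z hz
    have := hEq (hball z hz)
    simp only [hg_def] at this
    rw [show (starRingEnd ℂ) ((starRingEnd ℂ) z) = z from Complex.conj_conj z] at this
    exact this
end
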